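/- Let 1 ≤ k < n be coprime, with Hirzebruch–Jung continued fraction expansions n/k = [n_1,...,n_p] and n/(n−k) = [n_1',...,n_{p'}'] (all entries ≥ 2). Then p' = n_1 + ⋯ + n_p − 2p + 1. -/

import Mathlib

/-- Evaluation of the Hirzebruch–Jung ("negative") continued fraction
`[n₁,…,n_p] = n₁ − 1/(n₂ − 1/(⋯ − 1/n_p))` as a rational number. -/
def hjEval : List ℤ → ℚ
  | [] => 0
  | [a] => (a : ℚ)
  | a :: b :: l => (a : ℚ) - 1 / hjEval (b :: l)

lemma hjEval_cons_ne (a : ℤ) (l : List ℤ) (hl : l ≠ []) :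
    hjEval (a :: l) = (a : ℚ) - 1 / hjEval l := by
  cases l with
  | nil => exact absurd rfl hl
  | cons b m => rfl

lemma hjEval_gt_one : ∀ l : List ℤ, l ≠ [] → (∀ a ∈ l, 2 ≤ a) → 1 < hjEval l := by
  intro l
  induction l with
  | nil => intro h; exact absurd rfl h
  | cons a t ih =>
    intro _ h2
    have ha : 2 ≤ a := h2 a List.mem_cons_self
    have ha' : (2:ℚ) ≤ (a:ℚ) := by exact_mod_cast ha
    cases t with
    | nil => show (1:ℚ) < (a:ℚ); linarith
    | cons b m =>
      have hv : 1 < hjEval (b :: m) := ih (by simp) (fun x hx => h2 x (List.mem_cons_of_mem a hx))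
      have hpos : 0 < hjEval (b :: m) := lt_trans one_pos hv
      have h1 : 1 / hjEval (b :: m) < 1 := by rw [div_lt_one hpos]; exact hv
      have h0 : 0 < 1 / hjEval (b :: m) := by positivity
      show (1:ℚ) < (a:ℚ) - 1 / hjEval (b :: m)
      linarith

lemma hjEval_dec (a : ℤ) (l : List ℤ) :
    hjEval ((a - 1) :: l) = hjEval (a :: l) - 1 := by
  cases l with
  | nil => show ((a-1 : ℤ) : ℚ) = (a:ℚ) - 1; push_cast; ring
  | cons b m =>
    show ((a-1 : ℤ) : ℚ) - 1 / hjEval (b :: m) = ((a:ℚ) - 1 / hjEval (b :: m)) - 1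
    push_cast; ring

/-- head bounds: for nonempty tail with entries ≥ 2, `a-1 < hjEval (a::l) < a`. -/
lemma hjEval_bounds (a : ℤ) (l : List ℤ) (hl : l ≠ []) (h2 : ∀ x ∈ l, 2 ≤ x) :
    (a:ℚ) - 1 < hjEval (a :: l) ∧ hjEval (a :: l) < a := by
  have hv : 1 < hjEval l := hjEval_gt_one l hl h2
  have hpos : 0 < hjEval l := lt_trans one_pos hv
  have h1 : 1 / hjEval l < 1 := by rw [div_lt_one hpos]; exact hv
  have h0 : 0 < 1 / hjEval l := by positivity
  rw [hjEval_cons_ne a l hl]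
  constructor <;> linarith

lemma sum_ge_two_len : ∀ l : List ℤ, (∀ x ∈ l, 2 ≤ x) → 2 * (l.length : ℤ) ≤ l.sum := by
  intro l
  induction l with
  | nil => simp
  | cons a t ih =>
    intro h2
    have := ih (fun x hx => h2 x (List.mem_cons_of_mem a hx))
    have ha := h2 a List.mem_cons_self
    simp only [List.sum_cons, List.length_cons]
    push_cast
    linarith

lemma key : ∀ m : ℕ, ∀ L L' : List ℤ, L ≠ [] → L' ≠ [] →
    (∀ a ∈ L, 2 ≤ a) → (∀ a ∈ L', 2 ≤ a) →
    (L.sum - L.length).toNat = m →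
    hjEval L' = hjEval L / (hjEval L - 1) →
    (L'.length : ℤ) = L.sum - 2 * L.length + 1 := by
  intro m
  induction m using Nat.strong_induction_on with
  | _ m IH =>
  intro L L' hL hL' h2 h2' hm hval
  obtain ⟨a, l, rfl⟩ := List.exists_cons_of_ne_nil hL
  obtain ⟨b, t, rfl⟩ := List.exists_cons_of_ne_nil hL'
  have ha : 2 ≤ a := h2 a List.mem_cons_self
  have hb : 2 ≤ b := h2' b List.mem_cons_self
  have h2l : ∀ x ∈ l, 2 ≤ x := fun x hx => h2 x (List.mem_cons_of_mem a hx)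
  have h2t : ∀ x ∈ t, 2 ≤ x := fun x hx => h2' x (List.mem_cons_of_mem b hx)
  -- the measure is ≥ 1
  have hmeas : 1 ≤ (a :: l).sum - ((a :: l).length : ℤ) := by
    have h1 := sum_ge_two_len (a :: l) h2
    have : (1:ℤ) ≤ (a::l).length := by
      simp
    linarith
  by_cases hcase : a = 2 ∧ l = []
  · -- L = [2]
    obtain ⟨rfl, rfl⟩ := hcase
    have hx : hjEval ([2] : List ℤ) = 2 := by norm_num [hjEval]
    rw [hx] at hval
    norm_num at hval
    -- hval : hjEval (b :: t) = 2
    have ht : t = [] := by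
      by_contra htne
      obtain ⟨hlo, hhi⟩ := hjEval_bounds b t htne h2t
      rw [hval] at hlo hhi
      have h2b : (2:ℤ) < b := by exact_mod_cast (show (2:ℚ) < (b:ℚ) by linarith)
      have h3b : b < 3 := by exact_mod_cast (show (b:ℚ) < (3:ℚ) by linarith)
      omega
    subst ht
    simp [List.sum_cons]
  · -- split on whether hjEval L > 2 or L = 2 :: l with l ≠ []
    by_cases ha2 : a = 2
    · -- then l ≠ []
      subst ha2
      have hlne : l ≠ [] := by
        intro h; exact hcase ⟨rfl, h⟩
      have hy : 1 < hjEval l := hjEval_gt_one l hlne h2l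
      have hy0 : 0 < hjEval l := lt_trans one_pos hy
      set y := hjEval l with hydef
      have hx : hjEval (2 :: l) = 2 - 1 / y := by
        rw [hjEval_cons_ne _ l hlne]; norm_num; rfl
      -- x ∈ (1,2), x* = y* + 1 > 2
      have hx1 : 1 < hjEval (2 :: l) := hjEval_gt_one _ (by simp) h2
      have hxlt : hjEval (2 :: l) < 2 := by
        rw [hx]
        have : 0 < 1 / y := by positivity
        linarith
      set x := hjEval (2 :: l) with hxdef
      have hxm1 : 0 < x - 1 := by linarith
      have hyne : y ≠ 0 := ne_of_gt hy0
      have hy1ne : y - 1 ≠ 0 := by intro h; rw [sub_eq_zero] at h; rw [← h] at hy; exact lt_irrefl _ hy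
      have hdual : x / (x - 1) = y / (y - 1) + 1 := by
        rw [hx]
        rw [div_add' _ _ _ hy1ne, div_eq_div_iff (by rw [hx] at hxm1; linarith) hy1ne]
        field_simp
        ring
      rw [hdual] at hval
      -- hjEval (b::t) > 2 since y/(y-1) > 1
      have hyst : 1 < y / (y - 1) := by
        rw [lt_div_iff₀ (by linarith)]; linarith
      have hbt2 : 2 < hjEval (b :: t) := by rw [hval]; linarith
      -- so b ≥ 3
      have hb3 : 3 ≤ b := by
        by_contra hb3
        have hb2 : b = 2 := by omega
        subst hb2
        cases t with
        | nil =>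
          have : hjEval ([2] : List ℤ) = 2 := by norm_num [hjEval]
          rw [this] at hbt2; linarith
        | cons c s =>
          have := (hjEval_bounds 2 (c :: s) (by simp) h2t).2
          have : hjEval (2 :: c :: s) < 2 := by exact_mod_cast this
          linarith
      -- L'' = (b-1) :: t
      have hL''val : hjEval ((b - 1) :: t) = y / (y - 1) := by
        rw [hjEval_dec, hval]; ring
      have h2L'' : ∀ x ∈ (b - 1) :: t, 2 ≤ x := by
        intro x hx
        rcases List.mem_cons.mp hx with h | h
        · omega
        · exact h2t x h
      have hyy : y / (y - 1) = y / (y - 1) := rfl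
      have hmeas' : (l.sum - l.length).toNat < m := by
        have hsum : (2 :: l).sum = 2 + l.sum := by simp
        have hlen : ((2 :: l).length : ℤ) = 1 + l.length := by simp; ring
        have h1 := sum_ge_two_len l h2l
        have hl1 : (1:ℤ) ≤ l.length := by
          exact_mod_cast List.length_pos_iff.mpr hlne
        omega
      have := IH _ hmeas' l ((b-1) :: t) hlne (by simp) h2l h2L'' rfl hL''val
      -- this : ((b-1)::t).length = l.sum - 2*l.length + 1
      simp only [List.length_cons, List.sum_cons] at this ⊢
      push_cast at this ⊢
      linarith
    · -- a ≥ 3, x > 2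
      have ha3 : 3 ≤ a := by omega
      set x := hjEval (a :: l) with hxdef
      have hx2 : 2 < x := by
        cases l with
        | nil =>
          have : x = (a : ℚ) := rfl
          rw [this]
          have : (3:ℚ) ≤ (a:ℚ) := by exact_mod_cast ha3
          linarith
        | cons c s =>
          have := (hjEval_bounds a (c :: s) (by simp) h2l).1
          have h3 : (3:ℚ) ≤ (a:ℚ) := by exact_mod_cast ha3
          rw [← hxdef] at this
          linarith
      have hx1 : 1 < x := by linarith
      -- x* ∈ (1,2)
      have hst1 : 1 < x / (x - 1) := by
        rw [lt_div_iff₀ (by linarith)]; linarith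
      have hst2 : x / (x - 1) < 2 := by
        rw [div_lt_iff₀ (by linarith)]; linarith
      -- b = 2 and t ≠ []
      have hb2 : b = 2 := by
        by_contra hb2
        have hb3' : 3 ≤ b := by omega
        cases t with
        | nil =>
          have heq : hjEval [b] = (b:ℚ) := rfl
          rw [heq] at hval
          have : (3:ℚ) ≤ (b:ℚ) := by exact_mod_cast hb3'
          linarith
        | cons c s =>
          have hlo := (hjEval_bounds b (c :: s) (by simp) h2t).1
          rw [hval] at hlo
          have h3 : (3:ℚ) ≤ (b:ℚ) := by exact_mod_cast hb3'
          linarith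
      subst hb2
      have htne : t ≠ [] := by
        intro h; subst h
        have heq : hjEval ([2] : List ℤ) = 2 := by norm_num [hjEval]
        rw [heq] at hval
        linarith
      -- w = hjEval t satisfies 2 - 1/w = x/(x-1), so w = (x-1)/(x-2)
      have hw1 : 1 < hjEval t := hjEval_gt_one t htne h2t
      have hw0 : 0 < hjEval t := lt_trans one_pos hw1
      have hveq : hjEval (2 :: t) = 2 - 1 / hjEval t := by
        rw [hjEval_cons_ne _ t htne]; norm_num
      rw [hveq] at hval
      -- solve: hjEval t = (x-1)/(x-2)
      have hwval : hjEval t = (x - 1) / ((x - 1) - 1) := by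
        have hx2' : x - 2 ≠ 0 := by intro h; rw [sub_eq_zero] at h; rw [← h] at hx2; exact lt_irrefl _ hx2
        have hx1' : x - 1 ≠ 0 := by intro h; rw [sub_eq_zero] at h; rw [← h] at hx1; exact lt_irrefl _ hx1
        have hwne : hjEval t ≠ 0 := ne_of_gt hw0
        field_simp at hval
        have hkey : hjEval t * (x - 2) = x - 1 := by linear_combination hval
        rw [eq_div_iff (show x - 1 - 1 ≠ 0 by intro h; apply hx2'; linarith)]
        linear_combination hkey
      -- M = (a-1)::l, hjEval M = x - 1
      have hMval : hjEval ((a - 1) :: l) = x - 1 := by rw [hjEval_dec]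
      have h2M : ∀ z ∈ (a - 1) :: l, 2 ≤ z := by
        intro z hz
        rcases List.mem_cons.mp hz with h | h
        · omega
        · exact h2l z h
      have hmeas' : (((a-1) :: l).sum - ((a-1)::l).length).toNat < m := by
        have h1 := sum_ge_two_len ((a-1) :: l) h2M
        simp only [List.sum_cons, List.length_cons] at h1 ⊢
        simp only [List.sum_cons, List.length_cons] at hm hmeas
        omega
      have hwval' : hjEval t = hjEval ((a-1) :: l) / (hjEval ((a-1) :: l) - 1) := by
        rw [hMval, hwval]
      have := IH _ hmeas' ((a-1) :: l) t (by simp) htne h2M h2t rfl hwval'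
      simp only [List.length_cons, List.sum_cons] at this ⊢
      push_cast at this ⊢
      linarith

/-- If `n/k = [n₁,…,n_p]` and `n/(n−k) = [n₁',…,n_{p'}']` are the Hirzebruch–Jung
continued fraction expansions (all entries ≥ 2) for coprime `1 ≤ k < n`, then
`p' = n₁ + ⋯ + n_p − 2p + 1`. -/
theorem hj_dual_length (n k : ℕ) (hk : 1 ≤ k) (hkn : k < n) (hco : Nat.Coprime n k)
    (L L' : List ℤ) (hL : L ≠ []) (hL' : L' ≠ [])
    (h2 : ∀ a ∈ L, 2 ≤ a) (h2' : ∀ a ∈ L', 2 ≤ a)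
    (hval : hjEval L = (n : ℚ) / (k : ℚ))
    (hval' : hjEval L' = (n : ℚ) / ((n : ℚ) - (k : ℚ))) :
    (L'.length : ℤ) = L.sum - 2 * L.length + 1 := by
  have hk0 : (0:ℚ) < (k:ℚ) := by exact_mod_cast hk
  have hkn' : (k:ℚ) < (n:ℚ) := by exact_mod_cast hkn
  have hnk : (0:ℚ) < (n:ℚ) - (k:ℚ) := by linarith
  have hx : hjEval L = (n:ℚ)/(k:ℚ) := hval
  have hkne : (k:ℚ) ≠ 0 := ne_of_gt hk0
  have hnkne : (n:ℚ) - (k:ℚ) ≠ 0 := ne_of_gt hnk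
  have hdual : hjEval L' = hjEval L / (hjEval L - 1) := by
    rw [hval, hval']
    have hden : (n:ℚ)/(k:ℚ) - 1 ≠ 0 := by
      have : (n:ℚ)/(k:ℚ) - 1 = ((n:ℚ) - (k:ℚ))/(k:ℚ) := by field_simp
      rw [this]
      exact div_ne_zero hnkne hkne
    rw [div_eq_div_iff hnkne hden]
    field_simp
  exact key _ L L' hL hL' h2 h2' rfl hdual
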